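/- arXiv:2402.11043 — 2 statements merged into one kernel-verified Lean document; each statement's English description precedes it below -/
import Mathlib

section
/- If the interpolation function λ satisfies assumption (Λ3), then it also satisfies assumption (Λ2), and moreover there is a constant C > 0 such that for all u, v ∈ ℝ³ one has |λ(|u|)u − λ(|v|)v| ≤ C|u−v|^{1/2}, where by convention λ(|u|)u := 0 if u = 0. -/
open MeasureTheory Real Set Filter Metric
open scoped ENNReal Topology RealInnerProductSpace

noncomputable section

/-- Position (or velocity) space `ℝ³`. -/
abbrev E3 := EuclideanSpace ℝ (Fin 3)

/-- Phase space `ℝ³ × ℝ³`. -/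
abbrev E6 := E3 × E3

/-- Assumption (Λ1): there is `Λ₁ > 0` with `λ(σ) ≥ Λ₁/√σ` for all sufficiently small `σ > 0`. -/
def Lambda1 (lam : ℝ → ℝ) : Prop :=
  ∃ Λ₁ > (0:ℝ), ∃ σ₀ > (0:ℝ), ∀ σ : ℝ, 0 < σ → σ < σ₀ → Λ₁ / Real.sqrt σ ≤ lam σ

/-- Assumption (Λ2): there is `Λ₂ > 0` with `λ(σ) ≤ Λ₂/√σ` for every `σ > 0`. -/
def Lambda2 (lam : ℝ → ℝ) : Prop :=
  ∃ Λ₂ > (0:ℝ), ∀ σ : ℝ, 0 < σ → lam σ ≤ Λ₂ / Real.sqrt σ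

/-- Assumption (Λ3): `λ ∈ C¹((0,∞))`, `λ(σ) → 0` as `σ → ∞`, and there is `Λ₂ > 0` with
`−Λ₂/(2σ^{3/2}) ≤ λ'(σ) ≤ 0` for all `σ > 0`. -/
def Lambda3 (lam : ℝ → ℝ) : Prop :=
  (∀ σ : ℝ, 0 < σ → DifferentiableAt ℝ lam σ) ∧
  ContinuousOn (deriv lam) (Set.Ioi (0:ℝ)) ∧
  Filter.Tendsto lam Filter.atTop (nhds 0) ∧
  ∃ Λ₂ > (0:ℝ), ∀ σ : ℝ, 0 < σ →
    -Λ₂ / (2 * σ ^ ((3:ℝ)/2)) ≤ deriv lam σ ∧ deriv lam σ ≤ 0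

/-- The vector field `u ↦ λ(|u|)u` (equal to `0` at `u = 0`). -/
def lamVec (lam : ℝ → ℝ) (u : E3) : E3 := lam ‖u‖ • u

/-- Gradient of the Newtonian potential, `∇U^N_ρ(x) = ∫ (x−y)/|x−y|³ ρ(y) dy`. -/
def gradUN (ρ : E3 → ℝ) (x : E3) : E3 := ∫ y : E3, (ρ y / ‖x - y‖ ^ 3) • (x - y)

/-- Newtonian potential `U^N_ρ(x) = −∫ ρ(y)/|x−y| dy`. -/
def UN (ρ : E3 → ℝ) (x : E3) : ℝ := -∫ y : E3, ρ y / ‖x - y‖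

/-- The kernel `(x−y)/|x−y|³ + y/|y|³` appearing in the definition of `U^λ_ρ`. -/
def kerQ (x y : E3) : E3 := (‖x - y‖ ^ 3)⁻¹ • (x - y) + (‖y‖ ^ 3)⁻¹ • y

/-- The Mondian part `U^λ_ρ` of the potential (QUMOND formulation). -/
def Ulam (lam : ℝ → ℝ) (ρ : E3 → ℝ) (x : E3) : ℝ :=
  (4 * π)⁻¹ * ∫ y : E3, ⟪lamVec lam (gradUN ρ y), kerQ x y⟫

/-- The Mondian potential `U^M_ρ = U^N_ρ + U^λ_ρ`. -/
def UM (lam : ℝ → ℝ) (ρ : E3 → ℝ) (x : E3) : ℝ := UN ρ x + Ulam lam ρ x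

/-- `Q(v) = ∫₀^v λ(w) w dw`. -/
def Qfun (lam : ℝ → ℝ) (v : ℝ) : ℝ := ∫ w in (0:ℝ)..v, lam w * w

/-- Spherical symmetry (a.e.) of a density on `ℝ³`. -/
def IsRadial (ρ : E3 → ℝ) : Prop :=
  ∀ A : E3 ≃ₗᵢ[ℝ] E3, ∀ᵐ x : E3, ρ (A x) = ρ x

/-- Spherical symmetry (a.e.) of a distribution function on phase space. -/
def IsRadial6 (f : E6 → ℝ) : Prop :=
  ∀ A : E3 ≃ₗᵢ[ℝ] E3, ∀ᵐ z : E6, f (A z.1, A z.2) = f z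

/-- Mass inside the ball of radius `r`. -/
def Mball (ρ : E3 → ℝ) (r : ℝ) : ℝ := ∫ y in Metric.closedBall (0:E3) r, ρ y

/-- Newtonian potential energy `E^N_pot(ρ) = −(1/8π) ∫ |∇U^N_ρ|² dx`. -/
def EpotN (ρ : E3 → ℝ) : ℝ := -(8 * π)⁻¹ * ∫ x : E3, ‖gradUN ρ x‖ ^ 2

/-- Mondian part of the potential energy, relative to the reference density `ρbar`. -/
def EpotQ (lam : ℝ → ℝ) (ρbar ρ : E3 → ℝ) : ℝ :=
  -(4 * π)⁻¹ * ∫ x : E3, (Qfun lam ‖gradUN ρ x‖ - Qfun lam ‖gradUN ρbar x‖)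

/-- Mondian potential energy. -/
def EpotM (lam : ℝ → ℝ) (ρbar ρ : E3 → ℝ) : ℝ := EpotN ρ + EpotQ lam ρbar ρ

/-- The reference density `ρ̄`: continuous, nonnegative, spherically symmetric, of mass `M`,
with support equal to the closed ball of radius `R̄ > 0`. -/
structure RefDensity (ρbar : E3 → ℝ) (M Rbar : ℝ) : Prop where
  cont : Continuous ρbar
  nonneg : ∀ x, 0 ≤ ρbar x
  radial : ∀ (A : E3 ≃ₗᵢ[ℝ] E3) (x : E3), ρbar (A x) = ρbar x
  mass : (∫ x : E3, ρbar x) = M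
  Rpos : 0 < Rbar
  supp : tsupport ρbar = Metric.closedBall 0 Rbar

/-- Assumptions on the ansatz function `Ψ`. -/
structure PsiHyp (Psi : ℝ → ℝ) (n : ℝ) : Prop where
  npos : 0 < n
  nlt3 : n < 3
  smooth : ContDiffOn ℝ 1 Psi (Set.Ici 0)
  zero : Psi 0 = 0
  dzero : derivWithin Psi (Set.Ici 0) 0 = 0
  convex : StrictConvexOn ℝ (Set.Ici 0) Psi
  growth : ∃ C > (0:ℝ), ∃ r₀ > (0:ℝ), ∀ r ≥ r₀, C * r ^ (1 + 1/n) ≤ Psi r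

/-- Assumptions on the ansatz function `Φ`. -/
structure PhiHyp (Phi : ℝ → ℝ) (k : ℝ) : Prop where
  kpos : 0 < k
  klt : k < 3/2
  smooth : ContDiffOn ℝ 1 Phi (Set.Ici 0)
  zero : Phi 0 = 0
  dzero : derivWithin Phi (Set.Ici 0) 0 = 0
  convex : StrictConvexOn ℝ (Set.Ici 0) Phi
  growth : ∃ C > (0:ℝ), ∃ s₀ > (0:ℝ), ∀ s ≥ s₀, C * s ^ (1 + 1/k) ≤ Phi s

/-- The constraint set `R_M`. -/
def RMset (lam Psi : ℝ → ℝ) (ρbar : E3 → ℝ) (M : ℝ) (ρ : E3 → ℝ) : Prop :=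
  MemLp ρ 1 volume ∧ IsRadial ρ ∧ (∀ᵐ x : E3, 0 ≤ ρ x) ∧ (∫ x : E3, ρ x) = M ∧
  Integrable (fun x : E3 => Qfun lam ‖gradUN ρ x‖ - Qfun lam ‖gradUN ρbar x‖) volume ∧
  Integrable (fun x : E3 => Psi (ρ x)) volume

/-- The functional `H_E(ρ) = E^M_pot(ρ) + ∫ Ψ(ρ) dx`. -/
def HE (lam Psi : ℝ → ℝ) (ρbar : E3 → ℝ) (ρ : E3 → ℝ) : ℝ :=
  EpotM lam ρbar ρ + ∫ x : E3, Psi (ρ x)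

/-- The infimum of `H_E` over `R_M`. -/
def infHE (lam Psi : ℝ → ℝ) (ρbar : E3 → ℝ) (M : ℝ) : ℝ :=
  sInf ((HE lam Psi ρbar) '' {ρ | RMset lam Psi ρbar M ρ})

/-- A minimizing sequence of `H_E` in `R_M`. -/
def IsMinSeq (lam Psi : ℝ → ℝ) (ρbar : E3 → ℝ) (M : ℝ) (ρj : ℕ → E3 → ℝ) : Prop :=
  (∀ j, RMset lam Psi ρbar M (ρj j)) ∧
  Filter.Tendsto (fun j => HE lam Psi ρbar (ρj j)) Filter.atTop
    (nhds (infHE lam Psi ρbar M))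

/-- `ρ₀` is a minimizer of `H_E` over `R_M`. -/
def IsMinHE (lam Psi : ℝ → ℝ) (ρbar : E3 → ℝ) (M : ℝ) (ρ₀ : E3 → ℝ) : Prop :=
  RMset lam Psi ρbar M ρ₀ ∧ ∀ ρ, RMset lam Psi ρbar M ρ → HE lam Psi ρbar ρ₀ ≤ HE lam Psi ρbar ρ

/-- Spatial density induced by a distribution function. -/
def rhoOf (f : E6 → ℝ) (x : E3) : ℝ := ∫ v : E3, f (x, v)

/-- Kinetic energy of a distribution function. -/
def Ekin (f : E6 → ℝ) : ℝ := (1/2) * ∫ z : E6, ‖z.2‖ ^ 2 * f z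

/-- Casimir functional. -/
def Casimir (Phi : ℝ → ℝ) (f : E6 → ℝ) : ℝ := ∫ z : E6, Phi (f z)

/-- The functional `H_B(f) = E^M_pot(ρ_f) + E_kin(f) + C(f)`. -/
def HB (lam Phi : ℝ → ℝ) (ρbar : E3 → ℝ) (f : E6 → ℝ) : ℝ :=
  EpotM lam ρbar (rhoOf f) + Ekin f + Casimir Phi f

/-- The constraint set `F_M`. -/
def FMset (lam Phi : ℝ → ℝ) (ρbar : E3 → ℝ) (M : ℝ) (f : E6 → ℝ) : Prop :=
  MemLp f 1 volume ∧ IsRadial6 f ∧ (∀ᵐ z : E6, 0 ≤ f z) ∧ (∫ z : E6, f z) = M ∧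
  Integrable (fun x : E3 => Qfun lam ‖gradUN (rhoOf f) x‖ - Qfun lam ‖gradUN ρbar x‖) volume ∧
  Integrable (fun z : E6 => ‖z.2‖ ^ 2 * f z) volume ∧
  Integrable (fun z : E6 => Phi (f z)) volume

/-- `f₀` is a minimizer of `H_B` over `F_M`. -/
def IsMinHB (lam Phi : ℝ → ℝ) (ρbar : E3 → ℝ) (M : ℝ) (f₀ : E6 → ℝ) : Prop :=
  FMset lam Phi ρbar M f₀ ∧
  ∀ g, FMset lam Phi ρbar M g → HB lam Phi ρbar f₀ ≤ HB lam Phi ρbar g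

/-- The set `G_r` used to define the reduced ansatz function. -/
def GrSet (Phi : ℝ → ℝ) (r : ℝ) (g : E3 → ℝ) : Prop :=
  MemLp g 1 volume ∧ IsRadial g ∧ (∀ᵐ v : E3, 0 ≤ g v) ∧ (∫ v : E3, g v) = r ∧
  Integrable (fun v : E3 => (1/2) * ‖v‖ ^ 2 * g v + Phi (g v)) volume

/-- The reduced ansatz function `Ψ(r) = inf_{g ∈ G_r} ∫ ((1/2)|v|²g + Φ(g)) dv`. -/
def PsiRed (Phi : ℝ → ℝ) (r : ℝ) : ℝ :=
  sInf ((fun g : E3 → ℝ => ∫ v : E3, ((1/2) * ‖v‖ ^ 2 * g v + Phi (g v))) ''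
    {g | GrSet Phi r g})

/-- The local energy `E(x,v) = |v|²/2 + U^M_{ρ₀}(x)`. -/
def Eloc (lam : ℝ → ℝ) (ρ₀ : E3 → ℝ) (z : E6) : ℝ := ‖z.2‖ ^ 2 / 2 + UM lam ρ₀ z.1

/-- The distance functional `d(f,f₀)` in the collisionless situation. -/
def dB (lam Phi : ℝ → ℝ) (ρ₀ : E3 → ℝ) (f f₀ : E6 → ℝ) : ℝ :=
  ∫ z : E6, (Phi (f z) - Phi (f₀ z) + Eloc lam ρ₀ z * (f z - f₀ z))

/-- The distance functional `d(ρ,ρ₀)` in the fluid situation. -/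
def dE (lam Psi : ℝ → ℝ) (ρ₀ : E3 → ℝ) (ρ : E3 → ℝ) : ℝ :=
  ∫ x : E3, (Psi (ρ x) - Psi (ρ₀ x) + UM lam ρ₀ x * (ρ x - ρ₀ x))

/-- Total energy of a fluid state `(ρ,u)`. -/
def Efluid (lam Psi : ℝ → ℝ) (ρbar : E3 → ℝ) (ρ : E3 → ℝ) (u : E3 → E3) : ℝ :=
  EpotM lam ρbar ρ + (1/2) * ∫ x : E3, ‖u x‖ ^ 2 * ρ x + ∫ x : E3, Psi (ρ x)

-- auxiliary lemmas

lemma aux_rpow32 {σ : ℝ} (hσ : 0 < σ) : σ ^ ((3:ℝ)/2) = Real.sqrt σ ^ 3 := by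
  rw [Real.sqrt_eq_rpow, ← Real.rpow_natCast (σ ^ ((1:ℝ)/2)) 3, ← Real.rpow_mul hσ.le]
  norm_num

lemma aux_hasDeriv {lam : ℝ → ℝ} {Λ₂ : ℝ} (hd : ∀ σ : ℝ, 0 < σ → DifferentiableAt ℝ lam σ)
    {σ : ℝ} (hσ : 0 < σ) :
    HasDerivAt (fun τ => lam τ - Λ₂ / Real.sqrt τ)
      (deriv lam σ + Λ₂ / (2 * σ ^ ((3:ℝ)/2))) σ := by
  have hs0 : Real.sqrt σ ≠ 0 := (Real.sqrt_pos.mpr hσ).ne'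
  have hs : HasDerivAt Real.sqrt (1/(2*Real.sqrt σ)) σ := Real.hasDerivAt_sqrt hσ.ne'
  have hinv : HasDerivAt (fun τ => (Real.sqrt τ)⁻¹)
      (-(1/(2*Real.sqrt σ)) / (Real.sqrt σ)^2) σ := hs.inv hs0
  have hdiv : HasDerivAt (fun τ => Λ₂ * (Real.sqrt τ)⁻¹)
      (Λ₂ * (-(1/(2*Real.sqrt σ)) / (Real.sqrt σ)^2)) σ := hinv.const_mul Λ₂
  have hlam := (hd σ hσ).hasDerivAt
  have h := hlam.sub hdiv
  have heq : (fun τ => lam τ - Λ₂ / Real.sqrt τ) = fun τ => lam τ - Λ₂ * (Real.sqrt τ)⁻¹ := by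
    funext τ; rw [div_eq_mul_inv]
  rw [heq]
  refine h.congr_deriv ?_
  have hsq : Real.sqrt σ ^ 2 = σ := Real.sq_sqrt hσ.le
  rw [aux_rpow32 hσ, show Real.sqrt σ ^ 3 = σ * Real.sqrt σ from by rw [pow_succ, hsq]]
  field_simp
  rw [hsq, show Real.sqrt σ ^ 3 = σ * Real.sqrt σ from by rw [pow_succ, hsq]]; ring

lemma aux_g_mono {lam : ℝ → ℝ} (h3 : Lambda3 lam) {Λ₂ : ℝ} (hΛ : 0 < Λ₂)
    (hb : ∀ σ : ℝ, 0 < σ → -Λ₂ / (2 * σ ^ ((3:ℝ)/2)) ≤ deriv lam σ ∧ deriv lam σ ≤ 0) :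
    MonotoneOn (fun τ => lam τ - Λ₂ / Real.sqrt τ) (Set.Ioi (0:ℝ)) := by
  have hD : ∀ σ ∈ Set.Ioi (0:ℝ), HasDerivAt (fun τ => lam τ - Λ₂ / Real.sqrt τ)
      (deriv lam σ + Λ₂ / (2 * σ ^ ((3:ℝ)/2))) σ := fun σ hσ => aux_hasDeriv h3.1 hσ
  apply monotoneOn_of_deriv_nonneg (convex_Ioi 0)
  · exact fun σ hσ => ((hD σ hσ).continuousAt).continuousWithinAt
  · rw [interior_Ioi]
    exact fun σ hσ => ((hD σ hσ).differentiableAt).differentiableWithinAt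
  · rw [interior_Ioi]
    intro σ hσ
    rw [(hD σ hσ).deriv]
    have hσ' : (0:ℝ) < σ := hσ
    have h1 := (hb σ hσ').1
    have h2 : (0:ℝ) < 2 * σ ^ ((3:ℝ)/2) := by positivity
    have : -(Λ₂ / (2 * σ ^ ((3:ℝ)/2))) ≤ deriv lam σ := by
      rw [neg_div] at h1; exact h1
    linarith

lemma aux_lam_anti {lam : ℝ → ℝ} (h3 : Lambda3 lam)
    (hb : ∀ σ : ℝ, 0 < σ → deriv lam σ ≤ 0) :
    AntitoneOn lam (Set.Ioi (0:ℝ)) := by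
  apply antitoneOn_of_deriv_nonpos (convex_Ioi 0)
  · exact fun σ hσ => (h3.1 σ hσ).continuousAt.continuousWithinAt
  · rw [interior_Ioi]; exact fun σ hσ => (h3.1 σ hσ).differentiableWithinAt
  · rw [interior_Ioi]; exact fun σ hσ => hb σ hσ

lemma aux_lambda2 {lam : ℝ → ℝ} (h3 : Lambda3 lam) {Λ₂ : ℝ} (hΛ : 0 < Λ₂)
    (hb : ∀ σ : ℝ, 0 < σ → -Λ₂ / (2 * σ ^ ((3:ℝ)/2)) ≤ deriv lam σ ∧ deriv lam σ ≤ 0) :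
    ∀ σ : ℝ, 0 < σ → lam σ ≤ Λ₂ / Real.sqrt σ := by
  intro σ hσ
  have hmono := aux_g_mono h3 hΛ hb
  have hsq : Tendsto Real.sqrt atTop atTop := by
    have h := tendsto_rpow_atTop (by norm_num : (0:ℝ) < 1/2)
    refine h.congr' ?_
    filter_upwards [eventually_ge_atTop (0:ℝ)] with x hx
    rw [Real.sqrt_eq_rpow]
  have hlim : Tendsto (fun τ => lam τ - Λ₂ / Real.sqrt τ) atTop (nhds 0) := by
    have h2 : Tendsto (fun τ : ℝ => Λ₂ / Real.sqrt τ) atTop (nhds 0) :=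
      Tendsto.div_atTop tendsto_const_nhds hsq
    simpa using h3.2.2.1.sub h2
  have hev : ∀ᶠ τ in atTop, lam σ - Λ₂ / Real.sqrt σ ≤ lam τ - Λ₂ / Real.sqrt τ := by
    filter_upwards [eventually_ge_atTop σ] with τ hτ
    exact hmono hσ (lt_of_lt_of_le hσ hτ) hτ
  have := ge_of_tendsto hlim hev
  linarith

-- ‖lamVec lam w‖ = lam ‖w‖ * ‖w‖  and bound
lemma aux_vec_bound {lam : ℝ → ℝ} {Λ₂ : ℝ}
    (hnn : ∀ σ : ℝ, 0 < σ → 0 ≤ lam σ)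
    (h2 : ∀ σ : ℝ, 0 < σ → lam σ ≤ Λ₂ / Real.sqrt σ) (w : E3) :
    ‖lamVec lam w‖ ≤ Λ₂ * Real.sqrt ‖w‖ := by
  rcases eq_or_ne w 0 with rfl | hw
  · simp [lamVec]
  · have hw' : 0 < ‖w‖ := norm_pos_iff.mpr hw
    have : ‖lamVec lam w‖ = lam ‖w‖ * ‖w‖ := by
      rw [lamVec, norm_smul, Real.norm_eq_abs, abs_of_nonneg (hnn _ hw')]
    rw [this]
    calc lam ‖w‖ * ‖w‖ ≤ (Λ₂ / Real.sqrt ‖w‖) * ‖w‖ :=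
          mul_le_mul_of_nonneg_right (h2 _ hw') hw'.le
      _ = Λ₂ * (‖w‖ / Real.sqrt ‖w‖) := by ring
      _ = Λ₂ * Real.sqrt ‖w‖ := by rw [Real.div_sqrt]

lemma aux_key {lam : ℝ → ℝ} {Λ₂ : ℝ} (hΛ : 0 < Λ₂)
    (hnn : ∀ σ : ℝ, 0 < σ → 0 ≤ lam σ)
    (hanti : AntitoneOn lam (Set.Ioi (0:ℝ)))
    (hdiff : ∀ s t : ℝ, 0 < s → s ≤ t →
      lam s - lam t ≤ Λ₂ / Real.sqrt s - Λ₂ / Real.sqrt t)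
    (h2 : ∀ σ : ℝ, 0 < σ → lam σ ≤ Λ₂ / Real.sqrt σ)
    (u v : E3) (hle : ‖v‖ ≤ ‖u‖) :
    ‖lamVec lam u - lamVec lam v‖ ≤ 2 * Λ₂ * Real.sqrt ‖u - v‖ := by
  have hbu := aux_vec_bound hnn h2 u
  have hbv := aux_vec_bound hnn h2 v
  rcases le_or_gt ‖u‖ ‖u - v‖ with hcase | hcase
  · -- small case
    have h1 : Real.sqrt ‖u‖ ≤ Real.sqrt ‖u - v‖ := Real.sqrt_le_sqrt hcase
    have h2' : Real.sqrt ‖v‖ ≤ Real.sqrt ‖u - v‖ := Real.sqrt_le_sqrt (hle.trans hcase)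
    calc ‖lamVec lam u - lamVec lam v‖ ≤ ‖lamVec lam u‖ + ‖lamVec lam v‖ := norm_sub_le _ _
      _ ≤ Λ₂ * Real.sqrt ‖u - v‖ + Λ₂ * Real.sqrt ‖u - v‖ := by
          have := mul_le_mul_of_nonneg_left h1 hΛ.le
          have := mul_le_mul_of_nonneg_left h2' hΛ.le
          nlinarith
      _ = 2 * Λ₂ * Real.sqrt ‖u - v‖ := by ring
  · -- ‖u-v‖ < ‖u‖, so ‖u‖ > 0
    have hu : 0 < ‖u‖ := lt_of_le_of_lt (norm_nonneg _) hcase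
    have hsu : 0 < Real.sqrt ‖u‖ := Real.sqrt_pos.mpr hu
    have key1 : ‖u - v‖ / Real.sqrt ‖u‖ ≤ Real.sqrt ‖u - v‖ := by
      rw [div_le_iff₀ hsu]
      calc ‖u - v‖ = Real.sqrt ‖u - v‖ * Real.sqrt ‖u - v‖ :=
            (Real.mul_self_sqrt (norm_nonneg _)).symm
        _ ≤ Real.sqrt ‖u - v‖ * Real.sqrt ‖u‖ :=
            mul_le_mul_of_nonneg_left (Real.sqrt_le_sqrt hcase.le) (Real.sqrt_nonneg _)
    have hdecomp : lamVec lam u - lamVec lam v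
        = lam ‖u‖ • (u - v) + (lam ‖u‖ - lam ‖v‖) • v := by
      simp only [lamVec, smul_sub, sub_smul]; abel
    have term1 : ‖lam ‖u‖ • (u - v)‖ ≤ Λ₂ * Real.sqrt ‖u - v‖ := by
      rw [norm_smul, Real.norm_eq_abs, abs_of_nonneg (hnn _ hu)]
      calc lam ‖u‖ * ‖u - v‖ ≤ (Λ₂ / Real.sqrt ‖u‖) * ‖u - v‖ :=
            mul_le_mul_of_nonneg_right (h2 _ hu) (norm_nonneg _)
        _ = Λ₂ * (‖u - v‖ / Real.sqrt ‖u‖) := by ring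
        _ ≤ Λ₂ * Real.sqrt ‖u - v‖ := mul_le_mul_of_nonneg_left key1 hΛ.le
    have term2 : ‖(lam ‖u‖ - lam ‖v‖) • v‖ ≤ Λ₂ * Real.sqrt ‖u - v‖ := by
      rcases eq_or_ne v 0 with rfl | hv
      · simp; positivity
      · have hv' : 0 < ‖v‖ := norm_pos_iff.mpr hv
        have hsv : 0 < Real.sqrt ‖v‖ := Real.sqrt_pos.mpr hv'
        have hmono : lam ‖u‖ ≤ lam ‖v‖ := hanti hv' hu hle
        have habs : |lam ‖u‖ - lam ‖v‖| = lam ‖v‖ - lam ‖u‖ := by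
          rw [abs_of_nonpos (by linarith)]; ring
        rw [norm_smul, Real.norm_eq_abs, habs]
        have hd := hdiff ‖v‖ ‖u‖ hv' hle
        have hsvu : Real.sqrt ‖v‖ ≤ Real.sqrt ‖u‖ := Real.sqrt_le_sqrt hle
        -- (lam ‖v‖ - lam ‖u‖) * ‖v‖ ≤ Λ₂ (1/√s - 1/√t) * s ≤ Λ₂ (t - s)/√t ≤ Λ₂‖u-v‖/√t
        have step1 : (lam ‖v‖ - lam ‖u‖) * ‖v‖
            ≤ (Λ₂ / Real.sqrt ‖v‖ - Λ₂ / Real.sqrt ‖u‖) * ‖v‖ :=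
          mul_le_mul_of_nonneg_right hd hv'.le
        have hvs : ‖v‖ = Real.sqrt ‖v‖ * Real.sqrt ‖v‖ := (Real.mul_self_sqrt hv'.le).symm
        have hus : ‖u‖ = Real.sqrt ‖u‖ * Real.sqrt ‖u‖ := (Real.mul_self_sqrt hu.le).symm
        set a := Real.sqrt ‖v‖ with ha
        set b := Real.sqrt ‖u‖ with hb'
        have step2 : (Λ₂ / a - Λ₂ / b) * ‖v‖ ≤ Λ₂ * ((‖u‖ - ‖v‖) / b) := by
          rw [hvs, hus]
          have e1 : (Λ₂ / a - Λ₂ / b) * (a * a) = Λ₂ * a - Λ₂ * (a * a) / b := by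
            field_simp
          have e2 : Λ₂ * ((b * b - a * a) / b) = Λ₂ * b - Λ₂ * (a * a) / b := by
            field_simp
          rw [e1, e2]
          have : Λ₂ * a ≤ Λ₂ * b := mul_le_mul_of_nonneg_left hsvu hΛ.le
          linarith
        have step3 : Λ₂ * ((‖u‖ - ‖v‖) / Real.sqrt ‖u‖) ≤ Λ₂ * Real.sqrt ‖u - v‖ := by
          apply mul_le_mul_of_nonneg_left _ hΛ.le
          have hnorm : ‖u‖ - ‖v‖ ≤ ‖u - v‖ := by
            have := norm_sub_norm_le u v; linarith [le_abs_self (‖u‖ - ‖v‖)]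
          calc (‖u‖ - ‖v‖) / Real.sqrt ‖u‖ ≤ ‖u - v‖ / Real.sqrt ‖u‖ := by gcongr
            _ ≤ Real.sqrt ‖u - v‖ := key1
        linarith
    calc ‖lamVec lam u - lamVec lam v‖
        ≤ ‖lam ‖u‖ • (u - v)‖ + ‖(lam ‖u‖ - lam ‖v‖) • v‖ := by
          rw [hdecomp]; exact norm_add_le _ _
      _ ≤ 2 * Λ₂ * Real.sqrt ‖u - v‖ := by linarith

/-- (Λ3) implies (Λ2), and `u ↦ λ(|u|)u` is Hölder continuous with exponent 1/2. -/
theorem lambda3_implies_lambda2_and_holder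
    (lam : ℝ → ℝ) (hlam_meas : Measurable lam)
    (hlam_nonneg : ∀ σ : ℝ, 0 < σ → 0 ≤ lam σ)
    (h3 : Lambda3 lam) :
    Lambda2 lam ∧
    ∃ C > (0:ℝ), ∀ u v : E3,
      ‖lamVec lam u - lamVec lam v‖ ≤ C * ‖u - v‖ ^ ((1:ℝ)/2) := by
  obtain ⟨Λ₂, hΛ, hb⟩ := h3.2.2.2
  have h2 := aux_lambda2 h3 hΛ hb
  have hanti := aux_lam_anti h3 (fun σ hσ => (hb σ hσ).2)
  have hmono := aux_g_mono h3 hΛ hb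
  have hdiff : ∀ s t : ℝ, 0 < s → s ≤ t →
      lam s - lam t ≤ Λ₂ / Real.sqrt s - Λ₂ / Real.sqrt t := by
    intro s t hs hst
    have := hmono (show s ∈ Set.Ioi (0:ℝ) from hs)
      (show t ∈ Set.Ioi (0:ℝ) from lt_of_lt_of_le hs hst) hst
    simp only at this
    linarith
  refine ⟨⟨Λ₂, hΛ, h2⟩, 2 * Λ₂, by linarith, ?_⟩
  intro u v
  have hrw : ‖u - v‖ ^ ((1:ℝ)/2) = Real.sqrt ‖u - v‖ := by
    rw [Real.sqrt_eq_rpow]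
  rw [hrw]
  rcases le_total ‖v‖ ‖u‖ with hle | hle
  · exact aux_key hΛ hlam_nonneg hanti hdiff h2 u v hle
  · have := aux_key hΛ hlam_nonneg hanti hdiff h2 v u hle
    rw [← norm_neg (lamVec lam v - lamVec lam u), ← norm_neg (v - u)] at this
    simpa using this
end
end

section
/- Assume (Λ3). Then Q ∈ C¹([0,∞)) and there is a constant C > 0 such that for all u, v ∈ ℝ³ one has |Q(|u|) − Q(|v|) − λ(|v|)v · (u−v)| ≤ C|u−v|^{3/2}, where by convention λ(|v|)v := 0 if v = 0. -/
open MeasureTheory Real Set Filter Metric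
open scoped ENNReal Topology RealInnerProductSpace

noncomputable section

private lemma qaux_rpow32 {x : ℝ} (hx : 0 ≤ x) : x ^ ((3:ℝ)/2) = x * Real.sqrt x := by
  rcases hx.eq_or_lt with h | h
  · rw [← h, Real.zero_rpow (by norm_num), Real.sqrt_zero, zero_mul]
  · rw [show ((3:ℝ)/2) = 1 + 1/2 by norm_num, Real.rpow_add h, Real.rpow_one,
      Real.sqrt_eq_rpow]

private lemma qaux_sqrt_atTop : Filter.Tendsto Real.sqrt Filter.atTop Filter.atTop := by
  apply Filter.tendsto_atTop_atTop.mpr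
  intro b
  refine ⟨(max b 0) ^ 2, fun a ha => le_trans (le_max_left b 0) ?_⟩
  rw [← Real.sqrt_sq (le_max_right b 0)]
  exact Real.sqrt_le_sqrt ha

private lemma qaux_mem_uIoc {a b w : ℝ} (hw : w ∈ Set.uIoc a b) :
    min a b < w ∧ w ≤ max a b := by
  rcases Set.mem_uIoc.mp hw with h | h
  · exact ⟨lt_of_le_of_lt (min_le_left a b) h.1, le_trans h.2 (le_max_right a b)⟩
  · exact ⟨lt_of_le_of_lt (min_le_right a b) h.1, le_trans h.2 (le_max_left a b)⟩

private lemma qaux_decay (lam : ℝ → ℝ) (Λ₂ : ℝ)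
    (hdiff : ∀ σ : ℝ, 0 < σ → DifferentiableAt ℝ lam σ)
    (hd : ∀ σ : ℝ, 0 < σ → -Λ₂ / (2 * σ ^ ((3:ℝ)/2)) ≤ deriv lam σ ∧ deriv lam σ ≤ 0)
    (htop : Filter.Tendsto lam Filter.atTop (nhds 0)) :
    ∀ σ : ℝ, 0 < σ → lam σ ≤ Λ₂ / Real.sqrt σ := by
  intro σ hσ
  set ψ : ℝ → ℝ := fun s => lam s - Λ₂ * (Real.sqrt s)⁻¹ with hψdef
  have hder : ∀ s : ℝ, 0 < s →
      HasDerivAt ψ (deriv lam s - Λ₂ * (-(1 / (2 * Real.sqrt s)) / (Real.sqrt s) ^ 2)) s := by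
    intro s hs
    have h1 : HasDerivAt (fun t : ℝ => (Real.sqrt t)⁻¹)
        (-(1 / (2 * Real.sqrt s)) / (Real.sqrt s) ^ 2) s :=
      (Real.hasDerivAt_sqrt hs.ne').inv (Real.sqrt_ne_zero'.mpr hs)
    exact ((hdiff s hs).hasDerivAt).sub (h1.const_mul Λ₂)
  have hψnn : ∀ s : ℝ, 0 < s → 0 ≤ deriv ψ s := by
    intro s hs
    rw [(hder s hs).deriv]
    have hsq : 0 < Real.sqrt s := Real.sqrt_pos.mpr hs
    have hsq2 : (Real.sqrt s) ^ 2 = s := Real.sq_sqrt hs.le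
    have hlow := (hd s hs).1
    rw [qaux_rpow32 hs.le] at hlow
    have h0 : Λ₂ * (-(1 / (2 * Real.sqrt s)) / (Real.sqrt s) ^ 2)
        = -Λ₂ / (2 * (s * Real.sqrt s)) := by
      rw [hsq2]
      field_simp
    rw [h0]; linarith
  have hmono : ∀ τ : ℝ, σ ≤ τ → ψ σ ≤ ψ τ := by
    intro τ hτ
    have hcont : ContinuousOn ψ (Set.Ici σ) := fun s hs =>
      ((hder s (lt_of_lt_of_le hσ hs)).continuousAt).continuousWithinAt
    have hmono' : MonotoneOn ψ (Set.Ici σ) := by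
      apply monotoneOn_of_deriv_nonneg (convex_Ici σ) hcont
      · intro s hs
        rw [interior_Ici] at hs
        exact ((hder s (hσ.trans hs)).differentiableAt).differentiableWithinAt
      · intro s hs
        rw [interior_Ici] at hs
        exact hψnn s (hσ.trans hs)
    exact hmono' Set.self_mem_Ici hτ hτ
  have hψtop : Filter.Tendsto ψ Filter.atTop (nhds 0) := by
    have h1 : Filter.Tendsto (fun s : ℝ => Λ₂ * (Real.sqrt s)⁻¹) Filter.atTop (nhds (Λ₂ * 0)) :=
      (qaux_sqrt_atTop.inv_tendsto_atTop).const_mul Λ₂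
    simpa using htop.sub h1
  have hψσ : ψ σ ≤ 0 :=
    ge_of_tendsto hψtop (Filter.eventually_atTop.mpr ⟨σ, fun τ hτ => hmono τ hτ⟩)
  have : lam σ ≤ Λ₂ * (Real.sqrt σ)⁻¹ := by
    have := hψσ; simp only [hψdef] at this; linarith
  rwa [div_eq_mul_inv]

set_option maxHeartbeats 1000000 in
/-- under (Λ3), `Q ∈ C¹([0,∞))` and a first order Taylor estimate holds. -/
theorem Qfun_differentiable
    (lam : ℝ → ℝ) (hlam_meas : Measurable lam)
    (hlam_nonneg : ∀ σ : ℝ, 0 < σ → 0 ≤ lam σ)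
    (h3 : Lambda3 lam) :
    ContDiffOn ℝ 1 (Qfun lam) (Set.Ici 0) ∧
    ∃ C > (0:ℝ), ∀ u v : E3,
      |Qfun lam ‖u‖ - Qfun lam ‖v‖ - ⟪lamVec lam v, u - v⟫| ≤ C * ‖u - v‖ ^ ((3:ℝ)/2) := by
  obtain ⟨hdiff, hcontd, htop, Λ₂, hΛ, hd⟩ := h3
  have hdecay := qaux_decay lam Λ₂ hdiff hd htop
  set g : ℝ → ℝ := fun w => lam w * w with hgdef
  have hQ : ∀ v : ℝ, Qfun lam v = ∫ w in (0:ℝ)..v, g w := fun v => rfl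
  -- pointwise bound on g
  have hgbd : ∀ w : ℝ, 0 ≤ w → |g w| ≤ Λ₂ * Real.sqrt w := by
    intro w hw
    rcases hw.eq_or_lt with h | h
    · simp [hgdef, ← h]
    · have h1 : 0 ≤ g w := mul_nonneg (hlam_nonneg w h) h.le
      rw [abs_of_nonneg h1]
      calc lam w * w ≤ Λ₂ / Real.sqrt w * w :=
            mul_le_mul_of_nonneg_right (hdecay w h) h.le
        _ = Λ₂ * Real.sqrt w := by
            rw [div_mul_eq_mul_div, mul_div_assoc, Real.div_sqrt]
  have hgmeas : ∀ s : Set ℝ, MeasureTheory.AEStronglyMeasurable g (volume.restrict s) :=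
    fun s => ((hlam_meas.mul measurable_id).aestronglyMeasurable).restrict
  -- interval integrability of g on intervals in [0,∞)
  have hgint : ∀ a b : ℝ, 0 ≤ a → 0 ≤ b → IntervalIntegrable g volume a b := by
    intro a b ha hb
    apply IntervalIntegrable.mono_fun
      (intervalIntegrable_const (c := Λ₂ * Real.sqrt (max a b))) (hgmeas _)
    rw [Filter.EventuallyLE, MeasureTheory.ae_restrict_iff' measurableSet_uIoc]
    refine Filter.Eventually.of_forall fun w hw => ?_
    obtain ⟨hw1, hw2⟩ := qaux_mem_uIoc hw
    have hw0 : 0 < w := lt_of_le_of_lt (le_min ha hb) hw1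
    have hrhs : ‖Λ₂ * Real.sqrt (max a b)‖ = Λ₂ * Real.sqrt (max a b) :=
      Real.norm_of_nonneg (mul_nonneg hΛ.le (Real.sqrt_nonneg _))
    rw [hrhs, Real.norm_eq_abs]
    exact (hgbd w hw0.le).trans (mul_le_mul_of_nonneg_left (Real.sqrt_le_sqrt hw2) hΛ.le)
  have hQsub : ∀ a b : ℝ, 0 ≤ a → 0 ≤ b →
      Qfun lam a - Qfun lam b = ∫ w in b..a, g w := by
    intro a b ha hb
    rw [hQ, hQ]
    exact intervalIntegral.integral_interval_sub_left (hgint 0 a le_rfl ha)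
      (hgint 0 b le_rfl hb)
  -- derivative of g
  have hg' : ∀ w : ℝ, 0 < w → HasDerivAt g (deriv lam w * w + lam w) w := by
    intro w hw
    have := ((hdiff w hw).hasDerivAt).mul (hasDerivAt_id w)
    exact this.congr_deriv (by simp)
  have hg'bd : ∀ w : ℝ, 0 < w → |deriv lam w * w + lam w| ≤ Λ₂ / Real.sqrt w := by
    intro w hw
    have hsq : 0 < Real.sqrt w := Real.sqrt_pos.mpr hw
    obtain ⟨hd1, hd2⟩ := hd w hw
    rw [qaux_rpow32 hw.le] at hd1
    have hdiv : 0 ≤ Λ₂ / Real.sqrt w := div_nonneg hΛ.le (Real.sqrt_nonneg w)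
    apply abs_le.mpr
    constructor
    · have h1 : -Λ₂ / (2 * (w * Real.sqrt w)) * w ≤ deriv lam w * w :=
        mul_le_mul_of_nonneg_right hd1 hw.le
      have h2 : -Λ₂ / (2 * (w * Real.sqrt w)) * w = -(Λ₂ / Real.sqrt w) / 2 := by
        have hq : Real.sqrt w ≠ 0 := hsq.ne'
        have hwne : w ≠ 0 := hw.ne'
        field_simp
      have h3 := hlam_nonneg w hw
      rw [h2] at h1
      linarith
    · have h1 : deriv lam w * w ≤ 0 := mul_nonpos_of_nonpos_of_nonneg hd2 hw.le
      linarith [hdecay w hw]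
  -- the scalar Taylor estimate
  have hkey : ∀ a b δ : ℝ, 0 ≤ a → 0 ≤ b → |a - b| ≤ δ →
      |Qfun lam a - Qfun lam b - lam b * b * (a - b)| ≤ 4 * Λ₂ * (δ * Real.sqrt δ) := by
    intro a b δ ha hb hab
    have hδ : 0 ≤ δ := le_trans (abs_nonneg _) hab
    have haub : a ≤ b + δ := by have := (abs_le.mp hab).2; linarith
    have halb : b - δ ≤ a := by have := (abs_le.mp hab).1; linarith
    rw [hQsub a b ha hb]
    by_cases hcase : b ≤ 2 * δ
    · -- small b case
      have hmax : max b a ≤ 3 * δ := max_le (by linarith) (by linarith)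
      have hI : |∫ w in b..a, g w| ≤ Λ₂ * Real.sqrt (3 * δ) * |a - b| := by
        rw [← Real.norm_eq_abs]
        apply intervalIntegral.norm_integral_le_of_norm_le_const
        intro w hw
        obtain ⟨hw1, hw2⟩ := qaux_mem_uIoc hw
        have hw0 : 0 < w := lt_of_le_of_lt (le_min hb ha) hw1
        rw [Real.norm_eq_abs]
        exact (hgbd w hw0.le).trans (mul_le_mul_of_nonneg_left
          (Real.sqrt_le_sqrt (le_trans hw2 hmax)) hΛ.le)
      have hgb : |lam b * b * (a - b)| ≤ Λ₂ * Real.sqrt (2 * δ) * |a - b| := by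
        rw [abs_mul]
        exact mul_le_mul_of_nonneg_right ((hgbd b hb).trans
          (mul_le_mul_of_nonneg_left (Real.sqrt_le_sqrt hcase) hΛ.le)) (abs_nonneg _)
      have hs3 : Real.sqrt (3 * δ) ≤ 2 * Real.sqrt δ := by
        rw [Real.sqrt_mul (by norm_num : (0:ℝ) ≤ 3)]
        have : Real.sqrt 3 ≤ 2 := by
          nlinarith [Real.sq_sqrt (by norm_num : (0:ℝ) ≤ 3), Real.sqrt_nonneg 3]
        nlinarith [Real.sqrt_nonneg δ]
      have hs2 : Real.sqrt (2 * δ) ≤ 2 * Real.sqrt δ := by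
        rw [Real.sqrt_mul (by norm_num : (0:ℝ) ≤ 2)]
        have : Real.sqrt 2 ≤ 2 := by
          nlinarith [Real.sq_sqrt (by norm_num : (0:ℝ) ≤ 2), Real.sqrt_nonneg 2]
        nlinarith [Real.sqrt_nonneg δ]
      have habs := abs_sub (∫ w in b..a, g w) (lam b * b * (a - b))
      have h1 : Λ₂ * Real.sqrt (3 * δ) * |a - b| ≤ 2 * Λ₂ * (Real.sqrt δ * δ) := by
        have := mul_le_mul_of_nonneg_left hs3 hΛ.le
        nlinarith [abs_nonneg (a-b), Real.sqrt_nonneg (3*δ), mul_le_mul_of_nonneg_left hab (mul_nonneg hΛ.le (Real.sqrt_nonneg (3*δ)))]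
      have h2 : Λ₂ * Real.sqrt (2 * δ) * |a - b| ≤ 2 * Λ₂ * (Real.sqrt δ * δ) := by
        nlinarith [abs_nonneg (a-b), Real.sqrt_nonneg (2*δ), mul_le_mul_of_nonneg_left hab (mul_nonneg hΛ.le (Real.sqrt_nonneg (2*δ))), mul_le_mul_of_nonneg_left hs2 hΛ.le]
      calc |(∫ w in b..a, g w) - lam b * b * (a - b)|
          ≤ |∫ w in b..a, g w| + |lam b * b * (a - b)| := abs_sub _ _
        _ ≤ 2 * Λ₂ * (Real.sqrt δ * δ) + 2 * Λ₂ * (Real.sqrt δ * δ) :=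
            add_le_add (hI.trans h1) (hgb.trans h2)
        _ ≤ 4 * Λ₂ * (δ * Real.sqrt δ) := by ring_nf; linarith
    · -- large b case: b > 2δ
      push_neg at hcase
      have hb0 : 0 < b := lt_of_le_of_lt (by positivity) hcase
      have hsb : 0 < Real.sqrt b := Real.sqrt_pos.mpr hb0
      set L : ℝ := Λ₂ * Real.sqrt 2 / Real.sqrt b with hLdef
      have hLnn : 0 ≤ L := div_nonneg (mul_nonneg hΛ.le (Real.sqrt_nonneg 2)) (Real.sqrt_nonneg b)
      -- derivative bound on the interval
      have hddb : ∀ w ∈ Set.uIcc b a, |deriv lam w * w + lam w| ≤ L := by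
        intro w hw
        rw [Set.mem_uIcc] at hw
        have hwlb : b - δ ≤ w := by
          rcases hw with ⟨h1, h2⟩ | ⟨h1, h2⟩ <;> linarith
        have hw0 : 0 < w := by linarith
        refine (hg'bd w hw0).trans ?_
        rw [hLdef, div_le_div_iff₀ (Real.sqrt_pos.mpr hw0) hsb]
        have h1 : Real.sqrt b * Real.sqrt b = b := Real.mul_self_sqrt hb0.le
        have h2 : Real.sqrt (2 * w) ≥ Real.sqrt b := Real.sqrt_le_sqrt (by linarith)
        calc Λ₂ * Real.sqrt b ≤ Λ₂ * Real.sqrt (2 * w) := by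
              exact mul_le_mul_of_nonneg_left h2 hΛ.le
          _ = Λ₂ * Real.sqrt 2 * Real.sqrt w := by
              rw [Real.sqrt_mul (by norm_num : (0:ℝ) ≤ 2), mul_assoc]
      -- mean value estimate
      have hmvt : ∀ w ∈ Set.uIcc b a, |g w - g b| ≤ L * δ := by
        intro w hw
        have hsub : Set.uIcc b a ⊆ Set.Ioi (0:ℝ) := by
          intro x hx
          rw [Set.mem_uIcc] at hx
          have : b - δ ≤ x := by rcases hx with ⟨h1, h2⟩ | ⟨h1, h2⟩ <;> linarith
          have : (0:ℝ) < x := by linarith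
          exact this
        have hle : |g w - g b| ≤ L * |w - b| := by
          have := Convex.norm_image_sub_le_of_norm_hasDerivWithin_le
            (f := g) (f' := fun w => deriv lam w * w + lam w) (s := Set.uIcc b a)
            (fun x hx => (hg' x (hsub hx)).hasDerivWithinAt)
            (fun x hx => hddb x hx) (convex_uIcc b a) Set.left_mem_uIcc hw
          simpa [Real.norm_eq_abs] using this
        refine hle.trans (mul_le_mul_of_nonneg_left ?_ hLnn)
        rw [Set.mem_uIcc] at hw
        rw [abs_le]
        constructor
        · rcases hw with ⟨h1, h2⟩ | ⟨h1, h2⟩ <;> linarith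
        · rcases hw with ⟨h1, h2⟩ | ⟨h1, h2⟩ <;> linarith
      -- integral of difference
      have hsplit : (∫ w in b..a, g w) - lam b * b * (a - b) = ∫ w in b..a, (g w - g b) := by
        rw [intervalIntegral.integral_sub (hgint b a hb0.le ha) intervalIntegrable_const,
          intervalIntegral.integral_const]
        simp only [smul_eq_mul]
        ring
      rw [hsplit]
      have hI : |∫ w in b..a, (g w - g b)| ≤ L * δ * |a - b| := by
        rw [← Real.norm_eq_abs]
        apply intervalIntegral.norm_integral_le_of_norm_le_const
        intro w hw
        exact hmvt w (Set.uIoc_subset_uIcc hw)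
      refine hI.trans ?_
      -- L * δ * |a-b| ≤ L * δ * δ ≤ Λ₂ δ √δ ≤ 4 Λ₂ δ √δ
      have h1 : L * δ * |a - b| ≤ L * δ * δ :=
        mul_le_mul_of_nonneg_left hab (mul_nonneg hLnn hδ)
      refine h1.trans ?_
      have hsd : Real.sqrt 2 * δ ≤ Real.sqrt b * Real.sqrt δ := by
        have h2 : Real.sqrt 2 * δ = Real.sqrt (2 * δ) * Real.sqrt δ := by
          rw [Real.sqrt_mul (by norm_num : (0:ℝ) ≤ 2)]
          rw [mul_assoc, Real.mul_self_sqrt hδ]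
        rw [h2]
        exact mul_le_mul_of_nonneg_right (Real.sqrt_le_sqrt hcase.le) (Real.sqrt_nonneg δ)
      rw [hLdef]
      rw [div_mul_eq_mul_div, div_mul_eq_mul_div, div_le_iff₀ hsb]
      have h3 := mul_le_mul_of_nonneg_left hsd (mul_nonneg hΛ.le hδ)
      nlinarith [h3, mul_nonneg (mul_nonneg (mul_nonneg hΛ.le hδ) (Real.sqrt_nonneg δ)) (Real.sqrt_nonneg b)]
  constructor
  · -- C¹ regularity
    have hQd : ∀ v : ℝ, 0 < v → HasDerivAt (Qfun lam) (g v) v := by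
      intro v hv
      have hmf : StronglyMeasurableAtFilter g (nhds v) volume :=
        ⟨Set.univ, Filter.univ_mem, hgmeas _⟩
      have hcg : ContinuousAt g v := ((hdiff v hv).continuousAt).mul continuousAt_id
      exact intervalIntegral.integral_hasDerivAt_right (hgint 0 v le_rfl hv.le) hmf hcg
    have hQ00 : Qfun lam 0 = 0 := by rw [hQ]; exact intervalIntegral.integral_same
    have hQ0 : HasDerivWithinAt (Qfun lam) 0 (Set.Ici 0) 0 := by
      rw [hasDerivWithinAt_iff_tendsto_slope, Set.Ici_sdiff_left]
      apply squeeze_zero_norm' (a := fun v => Λ₂ * Real.sqrt v)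
      · filter_upwards [self_mem_nhdsWithin] with v hv
        have hv0 : 0 < v := hv
        have hQv : |Qfun lam v| ≤ Λ₂ * Real.sqrt v * |v - 0| := by
          rw [hQ, ← Real.norm_eq_abs]
          apply intervalIntegral.norm_integral_le_of_norm_le_const
          intro w hw
          obtain ⟨hw1, hw2⟩ := qaux_mem_uIoc hw
          rw [min_eq_left hv0.le] at hw1
          rw [max_eq_right hv0.le] at hw2
          rw [Real.norm_eq_abs]
          exact (hgbd w hw1.le).trans (mul_le_mul_of_nonneg_left (Real.sqrt_le_sqrt hw2) hΛ.le)
        rw [Real.norm_eq_abs, slope_def_field, hQ00, sub_zero, sub_zero, abs_div,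
          abs_of_pos hv0]
        rw [div_le_iff₀ hv0]
        rw [sub_zero, abs_of_pos hv0] at hQv
        exact hQv
      · have h1 : Filter.Tendsto (fun v : ℝ => Λ₂ * Real.sqrt v) (nhds 0)
            (nhds (Λ₂ * Real.sqrt 0)) := (continuous_const.mul Real.continuous_sqrt).tendsto 0
        simp only [Real.sqrt_zero, mul_zero] at h1
        exact h1.mono_left nhdsWithin_le_nhds
    have hdiffOn : DifferentiableOn ℝ (Qfun lam) (Set.Ici 0) := by
      intro x hx
      rcases (Set.mem_Ici.mp hx).eq_or_lt with h | h
      · rw [← h]; exact hQ0.differentiableWithinAt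
      · exact ((hQd x h).differentiableAt).differentiableWithinAt
    have hderiv_eq : ∀ x ∈ Set.Ici (0:ℝ), derivWithin (Qfun lam) (Set.Ici 0) x = g x := by
      intro x hx
      rcases (Set.mem_Ici.mp hx).eq_or_lt with h | h
      · rw [← h, hQ0.derivWithin (uniqueDiffOn_Ici 0 0 Set.self_mem_Ici)]
        simp [hgdef]
      · rw [((hQd x h).hasDerivWithinAt).derivWithin (uniqueDiffOn_Ici 0 x hx)]
    have hcontg : ContinuousOn g (Set.Ici 0) := by
      intro x hx
      rcases (Set.mem_Ici.mp hx).eq_or_lt with h | h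
      · rw [← h]
        have h0 : g 0 = 0 := by simp [hgdef]
        unfold ContinuousWithinAt
        rw [h0]
        apply squeeze_zero_norm' (a := fun v => Λ₂ * Real.sqrt v)
        · filter_upwards [self_mem_nhdsWithin] with v hv
          exact hgbd v hv
        · have h1 : Filter.Tendsto (fun v : ℝ => Λ₂ * Real.sqrt v) (nhds 0)
              (nhds (Λ₂ * Real.sqrt 0)) := (continuous_const.mul Real.continuous_sqrt).tendsto 0
          simp only [Real.sqrt_zero, mul_zero] at h1
          exact h1.mono_left nhdsWithin_le_nhds
      · exact (((hdiff x h).continuousAt).mul continuousAt_id).continuousWithinAt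
    have hfinal := (contDiffOn_succ_iff_derivWithin (n := 0) (uniqueDiffOn_Ici (0:ℝ))).mpr
      ⟨hdiffOn, fun h => by simp at h, (contDiffOn_zero).mpr (hcontg.congr hderiv_eq)⟩
    simpa using hfinal
  · -- Taylor estimate
    refine ⟨6 * Λ₂, by linarith, fun u v => ?_⟩
    set a : ℝ := ‖u‖ with hadef
    set b : ℝ := ‖v‖ with hbdef
    set δ : ℝ := ‖u - v‖ with hδdef
    have ha : 0 ≤ a := norm_nonneg u
    have hb : 0 ≤ b := norm_nonneg v
    have hδ : 0 ≤ δ := norm_nonneg _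
    have hab : |a - b| ≤ δ := abs_norm_sub_norm_le u v
    have hinner : ⟪lamVec lam v, u - v⟫ = lam b * (inner ℝ v (u - v) : ℝ) := by
      rw [lamVec, real_inner_smul_left]
    have hX : (inner ℝ v (u-v) : ℝ) = (inner ℝ v u : ℝ) - b ^ 2 := by
      rw [inner_sub_right, real_inner_self_eq_norm_sq]
    -- bound the geometric term
    have hgeom : |lam b * (b * (a - b) - (inner ℝ v (u - v) : ℝ))| ≤ 2 * Λ₂ * (δ * Real.sqrt δ) := by
      have hY : b * (a - b) - (inner ℝ v (u-v) : ℝ) = a * b - (inner ℝ v u : ℝ) := by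
        rw [hX]; ring
      rw [hY]
      rcases hb.eq_or_lt with h | h
      · have hv0 : v = 0 := norm_eq_zero.mp h.symm
        have hz : (inner ℝ v u : ℝ) = 0 := by rw [hv0]; exact inner_zero_left u
        rw [hz, ← h, mul_zero, sub_zero, mul_zero, abs_zero]
        exact mul_nonneg (mul_nonneg (by norm_num) hΛ.le) (mul_nonneg hδ (Real.sqrt_nonneg δ))
      · have hup : (inner ℝ v u : ℝ) ≤ a * b := by
          have := real_inner_le_norm v u
          rw [← hbdef, ← hadef] at this
          linarith
        have hnn : 0 ≤ lam b * (a * b - (inner ℝ v u : ℝ)) :=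
          mul_nonneg (hlam_nonneg b h) (by linarith)
        rw [abs_of_nonneg hnn]
        have hlb := hdecay b h
        have hsb : 0 < Real.sqrt b := Real.sqrt_pos.mpr h
        rcases le_total δ b with hc | hc
        · -- δ ≤ b : use a*b - ⟪v,u⟫ ≤ δ²/2
          have hq : a * b - (inner ℝ v u : ℝ) ≤ δ ^ 2 / 2 := by
            have hns : δ ^ 2 = a ^ 2 - 2 * (inner ℝ u v : ℝ) + b ^ 2 := by
              rw [hδdef, hadef, hbdef]; exact norm_sub_sq_real u v
            have hcomm : (inner ℝ u v : ℝ) = (inner ℝ v u : ℝ) := real_inner_comm v u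
            nlinarith [sq_nonneg (a - b)]
          have h1 : lam b * (a * b - (inner ℝ v u : ℝ)) ≤ Λ₂ / Real.sqrt b * (δ^2/2) := by
            apply mul_le_mul hlb hq (by linarith) (div_nonneg hΛ.le (Real.sqrt_nonneg b))
          refine h1.trans ?_
          rw [div_mul_eq_mul_div, div_le_iff₀ hsb]
          have hδs : δ ≤ Real.sqrt δ * Real.sqrt b := by
            calc δ = Real.sqrt δ * Real.sqrt δ := (Real.mul_self_sqrt hδ).symm
              _ ≤ Real.sqrt δ * Real.sqrt b :=
                mul_le_mul_of_nonneg_left (Real.sqrt_le_sqrt hc) (Real.sqrt_nonneg δ)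
          nlinarith [hΛ.le, hδ, Real.sqrt_nonneg δ, Real.sqrt_nonneg b,
            mul_le_mul_of_nonneg_left hδs (mul_nonneg hΛ.le hδ)]
        · -- b ≤ δ : use a*b - ⟪v,u⟫ ≤ 2bδ
          have hq : a * b - (inner ℝ v u : ℝ) ≤ 2 * b * δ := by
            have h1 : |(inner ℝ v (u - v) : ℝ)| ≤ b * δ := by
              have := abs_real_inner_le_norm v (u - v)
              rw [← hbdef, ← hδdef] at this
              exact this
            have h2 : (inner ℝ v (u-v) : ℝ) = (inner ℝ v u : ℝ) - b ^ 2 := hX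
            have h3 := abs_le.mp h1
            have h4 : b * (a - b) ≤ b * δ :=
              mul_le_mul_of_nonneg_left (by linarith [(abs_le.mp hab).2]) h.le
            nlinarith [h3.1, h3.2]
          have h1 : lam b * (a * b - (inner ℝ v u : ℝ)) ≤ Λ₂ / Real.sqrt b * (2 * b * δ) := by
            apply mul_le_mul hlb hq (by linarith) (div_nonneg hΛ.le (Real.sqrt_nonneg b))
          refine h1.trans ?_
          rw [div_mul_eq_mul_div, div_le_iff₀ hsb]
          have hss : Real.sqrt b ≤ Real.sqrt δ := Real.sqrt_le_sqrt hc
          have key : Λ₂ * (2 * b * δ) = 2 * Λ₂ * δ * (Real.sqrt b * Real.sqrt b) := by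
            rw [Real.mul_self_sqrt h.le]; ring
          rw [key]
          calc 2 * Λ₂ * δ * (Real.sqrt b * Real.sqrt b)
              ≤ 2 * Λ₂ * δ * (Real.sqrt b * Real.sqrt δ) :=
                mul_le_mul_of_nonneg_left
                  (mul_le_mul_of_nonneg_left hss (Real.sqrt_nonneg b))
                  (mul_nonneg (mul_nonneg (by norm_num : (0:ℝ) ≤ 2) hΛ.le) hδ)
            _ = 2 * Λ₂ * (δ * Real.sqrt δ) * Real.sqrt b := by ring
    -- combine
    have hdecomp : Qfun lam a - Qfun lam b - ⟪lamVec lam v, u - v⟫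
        = (Qfun lam a - Qfun lam b - lam b * b * (a - b))
          + lam b * (b * (a - b) - (inner ℝ v (u - v) : ℝ)) := by
      rw [hinner]; ring
    rw [hdecomp]
    have htot := (abs_add_le _ _).trans (add_le_add (hkey a b δ ha hb hab) hgeom)
    refine htot.trans ?_
    rw [qaux_rpow32 hδ]
    ring_nf
    linarith
end
end
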